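/- arXiv:1902.00374 — 2 statements merged into one kernel-verified Lean document; each statement's English description precedes it below -/
import Mathlib

section
/- For every positive integer n there exists a rational function r_n = p_n/q_n, where p_n and q_n are real polynomials of degree at most n and q_n has no zeros on the interval [-1,1], such that sup_{x ∈ [-1,1]} | |x| - r_n(x) | ≤ 3·exp(-√n). In particular, rational approximations to |x| on [-1,1] converge root-exponentially, i.e. at the rate O(exp(-C√n)) for some constant C > 0. -/
set_option maxHeartbeats 1000000
open Real Finset Polynomial

lemma prod_neg' (s : Finset ℕ) (f : ℕ → ℝ) :
    ∏ i ∈ s, (-f i) = (-1)^s.card * ∏ i ∈ s, f i := by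
  rw [← Finset.prod_const, ← Finset.prod_mul_distrib]; simp


lemma tanh_aux : ∀ u : ℝ, 0 ≤ u → 1 - u ≤ Real.exp (-(2*u)) * (1 + u) := by
  have hd : ∀ x : ℝ, HasDerivAt (fun u : ℝ => Real.exp (-(2*u)) * (1 + u) + u)
      (Real.exp (-(2*x)) * (-2) * (1 + x) + Real.exp (-(2*x)) * 1 + 1) x := by
    intro x
    have h1 : HasDerivAt (fun u : ℝ => -(2*u)) (-2) x := by
      simpa [Pi.neg_def] using ((hasDerivAt_id x).const_mul (2:ℝ)).neg
    have h2 := h1.exp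
    have h3 : HasDerivAt (fun u : ℝ => (1:ℝ) + u) 1 x := by
      simpa using (hasDerivAt_id x).const_add (1:ℝ)
    simpa [Pi.add_def, Pi.mul_def] using (h2.mul h3).add (hasDerivAt_id x)
  have hmono : MonotoneOn (fun u : ℝ => Real.exp (-(2*u)) * (1 + u) + u) (Set.Ici 0) := by
    apply monotoneOn_of_deriv_nonneg (convex_Ici 0)
    · fun_prop
    · intro x hx
      exact (hd x).differentiableAt.differentiableWithinAt
    · intro x hx
      rw [(hd x).deriv]
      have h5 : (2*x) + 1 ≤ Real.exp (2*x) := Real.add_one_le_exp _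
      have h6 : Real.exp (-(2*x)) * Real.exp (2*x) = 1 := by
        rw [← Real.exp_add]; simp
      have h7 : 0 < Real.exp (-(2*x)) := Real.exp_pos _
      nlinarith
  intro u hu
  have := hmono (Set.self_mem_Ici) hu hu
  simp only [mul_zero, neg_zero, Real.exp_zero, add_zero, mul_one, one_mul] at this
  nlinarith

lemma newman_prod_bound (N : ℕ) (hN : 0 < N) (ξ : ℝ) (hξ0 : 0 < ξ) (hξ1 : ξ < 1)
    (x : ℝ) (hx1 : ξ^N ≤ x) (hx2 : x ≤ 1) :
    ∏ k ∈ Finset.range N, |x - ξ^k| ≤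
      Real.exp (-(2 * ∑ j ∈ Finset.range N, ξ^(j+1))) * ∏ k ∈ Finset.range N, (x + ξ^k) := by
  have hξ1' : ξ ≤ 1 := hξ1.le
  have hx0 : 0 < x := lt_of_lt_of_le (pow_pos hξ0 N) hx1
  -- choose m with ξ^(m+1) ≤ x ≤ ξ^m
  set P : ℕ → Prop := fun k => x ≤ ξ^k with hP
  have hP0 : P 0 := by simpa [hP] using hx2
  set m := Nat.findGreatest P (N-1) with hm_def
  have hmle : m ≤ N - 1 := Nat.findGreatest_le _
  have hm : x ≤ ξ^m := Nat.findGreatest_spec (Nat.zero_le _) hP0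
  have hm' : ξ^(m+1) ≤ x := by
    rcases le_or_gt (m+1) (N-1) with h | h
    · have := Nat.findGreatest_is_greatest (Nat.lt_succ_self m) h
      simp only [hP, not_le] at this
      exact this.le
    · have hmN : m = N - 1 := le_antisymm hmle (by omega)
      have : ξ^N ≤ ξ^(m+1) ∧ ξ^(m+1) ≤ ξ^N := by
        constructor <;> apply pow_le_pow_of_le_one hξ0.le hξ1' <;> omega
      linarith [this.1]
  have hmN : m < N := by omega
  -- the exponent function
  set d : ℕ → ℕ := fun k => if k ≤ m then m+1-k else k-m with hd
  -- per-factor bound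
  have step : ∀ k ∈ Finset.range N, |x - ξ^k| ≤ Real.exp (-(2 * ξ^(d k))) * (x + ξ^k) := by
    intro k hk
    simp only [Finset.mem_range] at hk
    by_cases hkm : k ≤ m
    · -- ξ^k ≥ x
      have hu : (0:ℝ) ≤ ξ^(m+1-k) := (pow_pos hξ0 _).le
      have hE := tanh_aux (ξ^(m+1-k)) hu
      have hEpos : 0 < Real.exp (-(2 * ξ^(m+1-k))) := Real.exp_pos _
      have hxk : x ≤ ξ^k := le_trans hm (pow_le_pow_of_le_one hξ0.le hξ1' hkm)
      have hsplit : ξ^k * ξ^(m+1-k) = ξ^(m+1) := by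
        rw [← pow_add]; congr 1; omega
      have habs : |x - ξ^k| = ξ^k - x := by rw [abs_sub_comm, abs_of_nonneg (by linarith)]
      rw [habs, hd]
      simp only [hkm, if_pos]
      have hξk : 0 < ξ^k := pow_pos hξ0 _
      nlinarith [mul_le_mul_of_nonneg_left hE hξk.le,
        mul_le_mul_of_nonneg_left hm' hEpos.le]
    · -- ξ^k ≤ x
      push_neg at hkm
      have hu : (0:ℝ) ≤ ξ^(k-m) := (pow_pos hξ0 _).le
      have hE := tanh_aux (ξ^(k-m)) hu
      have hEpos : 0 < Real.exp (-(2 * ξ^(k-m))) := Real.exp_pos _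
      have hxk : ξ^k ≤ x := le_trans (pow_le_pow_of_le_one hξ0.le hξ1' (by omega)) hm'
      have hsplit : ξ^m * ξ^(k-m) = ξ^k := by
        rw [← pow_add]; congr 1; omega
      have habs : |x - ξ^k| = x - ξ^k := abs_of_nonneg (by linarith)
      rw [habs, hd]
      simp only [hkm.not_ge, if_neg, if_false]
      have hξk : 0 < ξ^k := pow_pos hξ0 _
      have hξm : 0 < ξ^m := pow_pos hξ0 _
      -- (x-ξ^k)(ξ^m+ξ^k) ≤ (ξ^m-ξ^k)(x+ξ^k) ≤ E(ξ^m+ξ^k)(x+ξ^k)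
      have key1 : (x - ξ^k) * (ξ^m + ξ^k) ≤ (ξ^m - ξ^k) * (x + ξ^k) := by nlinarith
      have key2 : (ξ^m - ξ^k) ≤ Real.exp (-(2 * ξ^(k-m))) * (ξ^m + ξ^k) := by
        nlinarith [mul_le_mul_of_nonneg_left hE hξm.le]
      have hxpos : 0 < x + ξ^k := by linarith
      have key3 : (ξ^m - ξ^k) * (x + ξ^k) ≤ Real.exp (-(2 * ξ^(k-m))) * (ξ^m + ξ^k) * (x + ξ^k) :=
        mul_le_mul_of_nonneg_right key2 hxpos.le
      have hpos : 0 < ξ^m + ξ^k := by linarith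
      nlinarith
  -- product bound
  have hprod : ∏ k ∈ Finset.range N, |x - ξ^k| ≤
      ∏ k ∈ Finset.range N, (Real.exp (-(2 * ξ^(d k))) * (x + ξ^k)) :=
    Finset.prod_le_prod (fun k _ => abs_nonneg _) step
  rw [Finset.prod_mul_distrib] at hprod
  have hexp : ∏ k ∈ Finset.range N, Real.exp (-(2 * ξ^(d k)))
      = Real.exp (∑ k ∈ Finset.range N, -(2 * ξ^(d k))) := (Real.exp_sum _ _).symm
  -- sum comparison
  have hsum : ∑ j ∈ Finset.range N, ξ^(j+1) ≤ ∑ k ∈ Finset.range N, ξ^(d k) := by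
    have hsplit : ∑ k ∈ Finset.range N, ξ^(d k)
        = ∑ k ∈ Finset.range (m+1), ξ^(d k) + ∑ k ∈ Finset.Ico (m+1) N, ξ^(d k) :=
      (Finset.sum_range_add_sum_Ico _ (by omega)).symm
    have h1 : ∑ k ∈ Finset.range (m+1), ξ^(d k) = ∑ j ∈ Finset.range (m+1), ξ^(j+1) := by
      rw [← Finset.sum_range_reflect]
      apply Finset.sum_congr rfl
      intro k hk
      simp only [Finset.mem_range] at hk
      congr 1
      simp only [hd]
      rw [if_pos (by omega)]
      omega
    have h2 : ∑ k ∈ Finset.Ico (m+1) N, ξ^(d k) = ∑ j ∈ Finset.range (N-1-m), ξ^(j+1) := by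
      rw [Finset.sum_Ico_eq_sum_range]
      apply Finset.sum_congr (by congr 1; omega)
      intro k hk
      simp only [Finset.mem_range] at hk
      congr 1
      simp only [hd]
      rw [if_neg (by omega)]
      omega
    rw [hsplit, h1, h2]
    have h3 := Finset.sum_range_add (fun j => ξ^(j+1)) (N-1-m) (m+1)
    rw [show N-1-m+(m+1) = N from by omega] at h3
    rw [h3]
    have h4 : ∑ j ∈ Finset.range (m+1), ξ^((N-1-m)+j+1) ≤ ∑ j ∈ Finset.range (m+1), ξ^(j+1) :=
      Finset.sum_le_sum (fun j _ => pow_le_pow_of_le_one hξ0.le hξ1' (by omega))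
    linarith
  have hle : Real.exp (∑ k ∈ Finset.range N, -(2 * ξ^(d k)))
      ≤ Real.exp (-(2 * ∑ j ∈ Finset.range N, ξ^(j+1))) := by
    apply Real.exp_le_exp.mpr
    rw [show ∑ k ∈ Finset.range N, -(2 * ξ^(d k)) = -(2 * ∑ k ∈ Finset.range N, ξ^(d k)) from by
      rw [Finset.mul_sum, ← Finset.sum_neg_distrib]]
    have := mul_le_mul_of_nonneg_left hsum (by norm_num : (0:ℝ) ≤ 2)
    linarith
  calc ∏ k ∈ Finset.range N, |x - ξ^k|
      ≤ (∏ k ∈ Finset.range N, Real.exp (-(2 * ξ^(d k)))) * ∏ k ∈ Finset.range N, (x + ξ^k) := hprod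
    _ ≤ Real.exp (-(2 * ∑ j ∈ Finset.range N, ξ^(j+1))) * ∏ k ∈ Finset.range N, (x + ξ^k) := by
        apply mul_le_mul_of_nonneg_right _ (Finset.prod_nonneg fun k _ => by positivity)
        rw [hexp]; exact hle

lemma newman_main (n : ℕ) (hn : 10 ≤ n) :
    ∃ p q : Polynomial ℝ,
      p.natDegree ≤ n ∧ q.natDegree ≤ n ∧
      (∀ x ∈ Set.Icc (-1 : ℝ) 1, q.eval x ≠ 0) ∧
      ∀ x ∈ Set.Icc (-1 : ℝ) 1,
        |(|x| - p.eval x / q.eval x)| ≤ 3 * Real.exp (-Real.sqrt n) := by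
  set N := 2 * (n / 2) with hN_def
  have hNn : N ≤ n := by omega
  have hN10 : 10 ≤ N := by omega
  have hN0 : 0 < N := by omega
  have hNeven : Even N := ⟨n/2, by omega⟩
  have hNpos : (0:ℝ) < N := by positivity
  set rn := Real.sqrt n with hrn_def
  have hrnsq : rn * rn = n := Real.mul_self_sqrt (by positivity)
  have hrn3 : 3 ≤ rn := by
    rw [hrn_def, show (3:ℝ) = Real.sqrt 9 from by
      rw [show (9:ℝ) = 3^2 by norm_num, Real.sqrt_sq (by norm_num)]]
    exact Real.sqrt_le_sqrt (by exact_mod_cast (by omega : 9 ≤ n))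
  have hrn0 : 0 < rn := by linarith
  set a := rn / N with ha_def
  have ha0 : 0 < a := by positivity
  have haN : a * N = rn := by rw [ha_def]; exact div_mul_cancel₀ rn hNpos.ne'
  -- a ≤ 9/25
  have ha36 : a ≤ 9/25 := by
    rw [ha_def, div_le_iff₀ hNpos]
    -- rn ≤ 9/25 * N ; suffices 625 n ≤ 81 N²
    have h1 : (625:ℝ) * n ≤ 81 * N * N := by
      have : 625 * n ≤ 81 * N * N := by nlinarith [hN10, hNn, (by omega : n ≤ N + 1)]
      exact_mod_cast this
    nlinarith [hrnsq, hrn0, hNpos]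
  set ξ := Real.exp (-a) with hξ_def
  have hξ0 : 0 < ξ := Real.exp_pos _
  have hξ1 : ξ < 1 := Real.exp_lt_one_iff.mpr (by linarith)
  set t := ξ^N with ht_def
  have ht : t = Real.exp (-rn) := by
    rw [ht_def, hξ_def, ← Real.exp_nat_mul]
    congr 1
    linarith [haN]
  have ht0 : 0 < t := pow_pos hξ0 _
  have ht20 : t ≤ 1/20 := by
    rw [ht]
    have h1 : Real.exp (-rn) ≤ Real.exp (-3) := Real.exp_le_exp.mpr (by linarith)
    have h2 : Real.exp (-3) ≤ 1/20 := by
      rw [Real.exp_neg, show (3:ℝ) = (3:ℕ) * 1 by norm_num, Real.exp_nat_mul]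
      rw [inv_le_iff_one_le_mul₀ (by positivity)]
      have h3 : (2.7182818283:ℝ)^3 ≤ (Real.exp 1)^3 := by
        apply pow_le_pow_left₀ (by norm_num) Real.exp_one_gt_d9.le
      nlinarith [h3]
    linarith
  -- key geometric sum bound
  have hsumbound : rn ≤ 2 * ∑ j ∈ Finset.range N, ξ^(j+1) := by
    have hfac : ∑ j ∈ Finset.range N, ξ^(j+1) = ξ * ∑ j ∈ Finset.range N, ξ^j := by
      rw [Finset.mul_sum]
      exact Finset.sum_congr rfl fun j _ => by rw [pow_succ, mul_comm]
    set S := ∑ j ∈ Finset.range N, ξ^j with hS_def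
    have hgeom : (1 - ξ) * S = 1 - t := by
      have h := mul_geom_sum ξ N
      rw [ht_def]
      linear_combination -h
    have hS0 : 0 ≤ S := Finset.sum_nonneg fun j _ => (pow_pos hξ0 j).le
    have hξlow : 1 - a ≤ ξ := by
      rw [hξ_def]
      linarith [Real.add_one_le_exp (-a)]
    have haS : 19/20 ≤ a * S := by nlinarith
    have haaN : a * (a * N) ≤ 11/10 := by
      have h10 : 10 * n ≤ 11 * N := by omega
      have h10' : (10:ℝ) * n ≤ 11 * N := by exact_mod_cast h10
      have : a * (a * N) * N = n := by
        rw [show a * (a*N) * N = (a*N) * (a*N) by ring, haN, hrnsq]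
      nlinarith
    rw [hfac]
    have h1 : 2*((1-a)*(a*S)) ≤ a * (2*(ξ*S)) := by
      nlinarith [mul_le_mul_of_nonneg_right hξlow hS0, ha0.le]
    have h2 : 2*((16:ℝ)/25)*(19/20) ≤ 2*((1-a)*(a*S)) := by
      nlinarith [haS, ha36]
    nlinarith [h1, h2, haaN, haN, ha0]
  -- polynomials
  set A : Polynomial ℝ := ∏ k ∈ Finset.range N, (X + C (ξ^k)) with hA_def
  set B : Polynomial ℝ := ∏ k ∈ Finset.range N, (X - C (ξ^k)) with hB_def
  have hevalA : ∀ y : ℝ, A.eval y = ∏ k ∈ Finset.range N, (y + ξ^k) := by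
    intro y; rw [hA_def, eval_prod]; exact Finset.prod_congr rfl fun k _ => by simp
  have hevalB : ∀ y : ℝ, B.eval y = ∏ k ∈ Finset.range N, (y - ξ^k) := by
    intro y; rw [hB_def, eval_prod]; exact Finset.prod_congr rfl fun k _ => by simp
  have hmonicA : A.Monic := monic_prod_of_monic _ _ fun k _ => monic_X_add_C _
  have hmonicB : B.Monic := monic_prod_of_monic _ _ fun k _ => monic_X_sub_C _
  have hdegA : A.natDegree = N := by
    rw [hA_def, Polynomial.natDegree_prod _ _ fun k _ => (monic_X_add_C _).ne_zero,
      Finset.sum_congr rfl (fun k _ => Polynomial.natDegree_X_add_C (ξ^k)),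
      Finset.sum_const, smul_eq_mul, mul_one, Finset.card_range]
  have hdegB : B.natDegree = N := by
    rw [hB_def, Polynomial.natDegree_prod _ _ fun k _ => (monic_X_sub_C _).ne_zero,
      Finset.sum_congr rfl (fun k _ => Polynomial.natDegree_X_sub_C (ξ^k)),
      Finset.sum_const, smul_eq_mul, mul_one, Finset.card_range]
  have hdegAB : (A - B).natDegree ≤ N - 1 := by
    apply Polynomial.natDegree_le_iff_coeff_eq_zero.mpr
    intro j hj
    rcases eq_or_lt_of_le (by omega : N ≤ j) with h | h
    · rw [Polynomial.coeff_sub, ← h]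
      have h1 : A.coeff N = 1 := by rw [← hdegA] at *; exact hmonicA.coeff_natDegree
      have h2 : B.coeff N = 1 := by rw [← hdegB] at *; exact hmonicB.coeff_natDegree
      rw [h1, h2, sub_self]
    · rw [Polynomial.coeff_sub,
        Polynomial.coeff_eq_zero_of_natDegree_lt (by omega : A.natDegree < j),
        Polynomial.coeff_eq_zero_of_natDegree_lt (by omega : B.natDegree < j), sub_self]
  -- product identities under negation
  have hnegA : ∀ y : ℝ, ∏ k ∈ Finset.range N, (-y + ξ^k) = ∏ k ∈ Finset.range N, (y - ξ^k) := by
    intro y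
    rw [Finset.prod_congr rfl (fun k _ => show -y + ξ^k = -(y - ξ^k) from by ring),
      prod_neg', Finset.card_range, hNeven.neg_one_pow, one_mul]
  have hnegB : ∀ y : ℝ, ∏ k ∈ Finset.range N, (-y - ξ^k) = ∏ k ∈ Finset.range N, (y + ξ^k) := by
    intro y
    rw [Finset.prod_congr rfl (fun k _ => show -y - ξ^k = -(y + ξ^k) from by ring),
      prod_neg', Finset.card_range, hNeven.neg_one_pow, one_mul]
  have havpos : ∀ y : ℝ, 0 ≤ y → 0 < ∏ k ∈ Finset.range N, (y + ξ^k) :=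
    fun y hy => Finset.prod_pos fun k _ => by positivity
  -- strict domination of |b| by a on (0,1]
  have habslt : ∀ y : ℝ, 0 < y → y ≤ 1 →
      |∏ k ∈ Finset.range N, (y - ξ^k)| < ∏ k ∈ Finset.range N, (y + ξ^k) := by
    intro y hy0 hy1
    have hmem : (0:ℕ) ∈ Finset.range N := Finset.mem_range.mpr hN0
    have e1 : |∏ k ∈ Finset.range N, (y - ξ^k)| = ∏ k ∈ Finset.range N, |y - ξ^k| :=
      Finset.abs_prod _ _
    rw [e1, ← Finset.mul_prod_erase _ _ hmem, ← Finset.mul_prod_erase _ (fun k => y + ξ^k) hmem]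
    simp only [pow_zero]
    have hP1 : ∏ k ∈ (Finset.range N).erase 0, |y - ξ^k| ≤
        ∏ k ∈ (Finset.range N).erase 0, (y + ξ^k) := by
      apply Finset.prod_le_prod (fun k _ => abs_nonneg _)
      intro k _
      have h1 : 0 < ξ^k := pow_pos hξ0 _
      rw [abs_le]
      constructor <;> nlinarith
    have hP2 : 0 < ∏ k ∈ (Finset.range N).erase 0, (y + ξ^k) :=
      Finset.prod_pos fun k _ => by positivity
    have h2 : |y - 1| < y + 1 := by rw [abs_lt]; constructor <;> nlinarith
    calc |y - 1| * ∏ k ∈ (Finset.range N).erase 0, |y - ξ^k|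
        ≤ |y - 1| * ∏ k ∈ (Finset.range N).erase 0, (y + ξ^k) :=
          mul_le_mul_of_nonneg_left hP1 (abs_nonneg _)
      _ < (y + 1) * ∏ k ∈ (Finset.range N).erase 0, (y + ξ^k) :=
          mul_lt_mul_of_pos_right h2 hP2
  -- q positive on [0,1]
  have hqpos : ∀ y : ℝ, 0 ≤ y → y ≤ 1 →
      0 < ∏ k ∈ Finset.range N, (y + ξ^k) + ∏ k ∈ Finset.range N, (y - ξ^k) := by
    intro y hy0 hy1
    rcases eq_or_lt_of_le hy0 with h | h
    · rw [← h]
      have e1 : ∏ k ∈ Finset.range N, ((0:ℝ) + ξ^k) = ∏ k ∈ Finset.range N, ξ^k := by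
        apply Finset.prod_congr rfl; intro k _; ring
      have e2 : ∏ k ∈ Finset.range N, ((0:ℝ) - ξ^k) = ∏ k ∈ Finset.range N, ξ^k := by
        rw [Finset.prod_congr rfl (fun k _ => show (0:ℝ) - ξ^k = -(ξ^k) from by ring),
          prod_neg', Finset.card_range, hNeven.neg_one_pow, one_mul]
      rw [e1, e2]
      have : 0 < ∏ k ∈ Finset.range N, ξ^k := Finset.prod_pos fun k _ => pow_pos hξ0 _
      linarith
    · have := habslt y h hy1
      have h2 := neg_abs_le (∏ k ∈ Finset.range N, (y - ξ^k))
      linarith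
  refine ⟨X * (A - B), A + B, ?_, ?_, ?_, ?_⟩
  · calc (X * (A - B)).natDegree ≤ X.natDegree + (A - B).natDegree := Polynomial.natDegree_mul_le
      _ ≤ 1 + (N - 1) := by
          have := Polynomial.natDegree_X (R := ℝ)
          omega
      _ ≤ n := by omega
  · calc (A + B).natDegree ≤ max A.natDegree B.natDegree := Polynomial.natDegree_add_le _ _
      _ ≤ n := by omega
  · -- q nonvanishing
    intro x hx
    obtain ⟨hxl, hxr⟩ := hx
    have hq : ∀ y : ℝ, (A+B).eval y
        = ∏ k ∈ Finset.range N, (y + ξ^k) + ∏ k ∈ Finset.range N, (y - ξ^k) :=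
      fun y => by rw [eval_add, hevalA, hevalB]
    rcases le_or_gt 0 x with h | h
    · rw [hq]; exact (hqpos x h hxr).ne'
    · have eA := hnegA (-x); simp only [neg_neg] at eA
      have eB := hnegB (-x); simp only [neg_neg] at eB
      rw [hq, eA, eB]
      have hp := hqpos (-x) (by linarith) (by linarith)
      exact fun hcon => hp.ne' (by linarith)
  · -- error bound
    intro x hx
    obtain ⟨hxl, hxr⟩ := hx
    have hcore : ∀ y : ℝ, 0 ≤ y → y ≤ 1 →
        |y - (X*(A-B)).eval y / (A+B).eval y| ≤ 3 * t := by
      intro y hy0 hy1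
      have hpq : (X*(A-B)).eval y = y * (A.eval y - B.eval y) := by simp
      have havp : 0 < ∏ k ∈ Finset.range N, (y + ξ^k) := havpos y hy0
      set av := ∏ k ∈ Finset.range N, (y + ξ^k) with hav
      set bv := ∏ k ∈ Finset.range N, (y - ξ^k) with hbv
      have hqv : (A+B).eval y = av + bv := by rw [eval_add, hevalA, hevalB]
      have hqvpos : 0 < av + bv := hqpos y hy0 hy1
      have heq : y - (X*(A-B)).eval y / (A+B).eval y = 2*y*bv/(av+bv) := by
        rw [hpq, hqv, hevalA, hevalB, ← hav, ← hbv]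
        field_simp
        ring
      rw [heq]
      rcases le_or_gt y t with hc | hc
      · -- small region: 0 ≤ bv ≤ av
        have hbveq : bv = ∏ k ∈ Finset.range N, (ξ^k - y) := by
          rw [hbv, Finset.prod_congr rfl (fun k _ => show y - ξ^k = -(ξ^k - y) from by ring),
            prod_neg', Finset.card_range, hNeven.neg_one_pow, one_mul]
        have hterm : ∀ k ∈ Finset.range N, (0:ℝ) ≤ ξ^k - y := by
          intro k hk
          simp only [Finset.mem_range] at hk
          have : ξ^N ≤ ξ^k := pow_le_pow_of_le_one hξ0.le hξ1.le (by omega)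
          have : t ≤ ξ^k := by rw [ht_def] at *; linarith
          linarith
        have hbv0 : 0 ≤ bv := by rw [hbveq]; exact Finset.prod_nonneg hterm
        have hbvav : bv ≤ av := by
          rw [hbveq, hav]
          apply Finset.prod_le_prod hterm
          intro k hk
          linarith [hy0]
        have h1 : 0 ≤ 2*y*bv/(av+bv) := by positivity
        have h2 : 2*y*bv/(av+bv) ≤ y := by
          rw [div_le_iff₀ hqvpos]; nlinarith
        rw [abs_of_nonneg h1]
        linarith [ht0]
      · -- main region
        have habs : |bv| ≤ t * av := by
          have h1 : |bv| = ∏ k ∈ Finset.range N, |y - ξ^k| := Finset.abs_prod _ _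
          have h2 := newman_prod_bound N hN0 ξ hξ0 hξ1 y (by rw [ht_def] at hc; linarith) hy1
          have h3 : Real.exp (-(2 * ∑ j ∈ Finset.range N, ξ^(j+1))) ≤ t := by
            rw [ht]; exact Real.exp_le_exp.mpr (by linarith [hsumbound])
          calc |bv| = ∏ k ∈ Finset.range N, |y - ξ^k| := h1
            _ ≤ Real.exp (-(2 * ∑ j ∈ Finset.range N, ξ^(j+1))) * av := h2
            _ ≤ t * av := mul_le_mul_of_nonneg_right h3 havp.le
        have hq2 : (1 - t) * av ≤ av + bv := by nlinarith [neg_abs_le bv]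
        have habs2 : |2*y*bv/(av+bv)| = 2*y*|bv|/(av+bv) := by
          rw [abs_div, abs_of_pos hqvpos, abs_mul, abs_mul,
            abs_of_nonneg hy0, abs_of_nonneg (by norm_num : (0:ℝ) ≤ 2)]
        rw [habs2, div_le_iff₀ hqvpos]
        nlinarith [habs, hq2, ht0, ht20, havp, abs_nonneg bv,
          mul_nonneg (sub_nonneg.mpr hy1) (abs_nonneg bv),
          mul_le_mul_of_nonneg_left hq2 (by linarith : (0:ℝ) ≤ 3*t)]
    rw [← ht]
    rcases le_or_gt 0 x with h | h
    · have := hcore x h hxr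
      rwa [abs_of_nonneg h]
    · have h1 := hcore (-x) (by linarith) (by linarith)
      have eA := hnegA (-x); simp only [neg_neg] at eA
      have eB := hnegB (-x); simp only [neg_neg] at eB
      have e1 : (X*(A-B)).eval x = (X*(A-B)).eval (-x) := by
        simp only [eval_mul, eval_X, eval_sub, hevalA, hevalB]
        rw [eA, eB]
        ring
      have e2 : (A+B).eval x = (A+B).eval (-x) := by
        simp only [eval_add, hevalA, hevalB]
        rw [eA, eB]
        ring
      rw [abs_of_neg h, e1, e2]
      exact h1


/-- **Newman's theorem (1964).** For every positive integer `n` there is a rational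
function `rₙ = pₙ/qₙ`, with `pₙ, qₙ` real polynomials of degree at most `n` and `qₙ`
nonvanishing on `[-1,1]`, such that `| |x| - rₙ(x) | ≤ 3 · exp(-√n)` for all
`x ∈ [-1,1]`; in particular rational approximations to `|x|` converge
root-exponentially. -/
theorem newman_rational_approximation_of_abs (n : ℕ) (hn : 0 < n) :
    ∃ p q : Polynomial ℝ,
      p.natDegree ≤ n ∧ q.natDegree ≤ n ∧
      (∀ x ∈ Set.Icc (-1 : ℝ) 1, q.eval x ≠ 0) ∧
      ∀ x ∈ Set.Icc (-1 : ℝ) 1,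
        |(|x| - p.eval x / q.eval x)| ≤ 3 * Real.exp (-Real.sqrt n) := by
  rcases le_or_gt 10 n with h10 | h10
  · exact newman_main n h10
  -- small cases
  have hexp3 : (1:ℝ)/24 ≤ Real.exp (-3) := by
    have h24 : Real.exp 1 ^ 3 ≤ 24 := by
      have h := pow_le_pow_left₀ (Real.exp_pos 1).le Real.exp_one_lt_d9.le 3
      nlinarith [h]
    have hpos : (0:ℝ) < Real.exp 1 ^ 3 := by positivity
    have h1 : Real.exp (-3) = 1 / (Real.exp 1 ^ 3) := by
      rw [Real.exp_neg, show (3:ℝ) = (3:ℕ) * 1 by norm_num, Real.exp_nat_mul]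
      exact (one_div _).symm
    rw [h1]
    exact one_div_le_one_div_of_le hpos h24
  have hsqrtn : Real.sqrt n ≤ 3 := by
    calc Real.sqrt n ≤ Real.sqrt 9 := Real.sqrt_le_sqrt (by exact_mod_cast (by omega : n ≤ 9))
      _ = 3 := by rw [show (9:ℝ) = 3^2 by norm_num, Real.sqrt_sq (by norm_num)]
  have hkey : (1:ℝ)/8 ≤ 3 * Real.exp (-Real.sqrt n) := by
    have : Real.exp (-3) ≤ Real.exp (-Real.sqrt n) := Real.exp_le_exp.mpr (by linarith)
    linarith
  rcases eq_or_lt_of_le (Nat.succ_le_of_lt hn) with h1 | h2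
  · -- n = 1
    refine ⟨C (1/2), 1, ?_, ?_, ?_, ?_⟩
    · simp
    · simp
    · intro x hx; simp
    · intro x hx
      obtain ⟨hxl, hxr⟩ := hx
      have hax : |x| ≤ 1 := abs_le.mpr ⟨hxl, hxr⟩
      have hax0 : 0 ≤ |x| := abs_nonneg x
      simp only [eval_C, eval_one, div_one]
      have h12 : |(|x| - 1/2)| ≤ 1/2 := abs_le.mpr ⟨by linarith, by linarith⟩
      have hsq1 : Real.sqrt n = 1 := by rw [← h1]; simp
      rw [hsq1]
      have : (1:ℝ)/6 ≤ Real.exp (-1) := by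
        rw [Real.exp_neg]
        have := mul_inv_cancel₀ (Real.exp_ne_zero 1)
        nlinarith [Real.exp_one_lt_d9, Real.exp_pos 1, inv_pos.mpr (Real.exp_pos 1)]
      linarith
  · -- 2 ≤ n ≤ 9
    refine ⟨X^2 + C (1/8), 1, ?_, ?_, ?_, ?_⟩
    · calc (X^2 + C (1/8) : ℝ[X]).natDegree ≤ max (X^2 : ℝ[X]).natDegree (C (1/8) : ℝ[X]).natDegree :=
          Polynomial.natDegree_add_le _ _
        _ ≤ n := by simp [Polynomial.natDegree_X_pow, Polynomial.natDegree_C]; omega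
    · simp
    · intro x hx; simp
    · intro x hx
      obtain ⟨hxl, hxr⟩ := hx
      have hax : |x| ≤ 1 := abs_le.mpr ⟨hxl, hxr⟩
      have hax0 : 0 ≤ |x| := abs_nonneg x
      have hsq : |x|^2 = x^2 := sq_abs x
      simp only [eval_add, eval_pow, eval_X, eval_C, eval_one, div_one]
      have h18 : |(|x| - (x^2 + 1/8))| ≤ 1/8 := by
        rw [abs_le]
        constructor <;> nlinarith [sq_nonneg (|x| - 1/2)]
      linarith
end

section
/- There exists a constant c > 0 such that for every positive integer n and every real polynomial p of degree at most n, sup_{x ∈ [-1,1]} | |x| - p(x) | ≥ c/n. In other words, polynomial approximations to |x| on [-1,1] converge at best at the rate O(n^{-1}). -/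
open Real intervalIntegral

lemma integral_cos_kx (k : ℤ) (hk : k ≠ 0) :
    ∫ θ in (0:ℝ)..π, cos ((k:ℝ) * θ) = 0 := by
  have h : ∀ θ ∈ Set.uIcc (0:ℝ) π, HasDerivAt (fun x => sin ((k:ℝ)*x) / k) (cos ((k:ℝ)*θ)) θ := by
    intro θ _
    have h1 : HasDerivAt (fun x : ℝ => (k:ℝ)*x) (k:ℝ) θ := by
      simpa using (hasDerivAt_id θ).const_mul (k:ℝ)
    have := (h1.sin).div_const (k:ℝ)
    simpa [mul_comm, mul_div_assoc, mul_div_cancel_left₀ _ (by exact_mod_cast hk : (k:ℝ) ≠ 0)] using this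
  rw [integral_eq_sub_of_hasDerivAt h ((by fun_prop : Continuous fun x : ℝ => cos ((k:ℝ)*x)).intervalIntegrable _ _)]
  simp [Real.sin_int_mul_pi]

lemma cos_mul_cos (a b : ℝ) : cos a * cos b = (cos (a+b) + cos (a-b))/2 := by
  rw [Real.cos_add, Real.cos_sub]; ring

lemma integral_cospow_mul_cos (l : ℕ) : ∀ k : ℤ, (l:ℤ) < k →
    ∫ θ in (0:ℝ)..π, (cos θ)^l * cos ((k:ℝ) * θ) = 0 := by
  induction l with
  | zero => intro k hk; simpa using integral_cos_kx k (by omega)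
  | succ l ih =>
    intro k hk
    have hcong : ∀ θ : ℝ, (cos θ)^(l+1) * cos ((k:ℝ) * θ)
        = ((cos θ)^l * cos (((k+1:ℤ):ℝ) * θ) + (cos θ)^l * cos (((k-1:ℤ):ℝ) * θ))/2 := by
      intro θ
      have h1 : cos θ * cos ((k:ℝ)*θ) = (cos (((k+1:ℤ):ℝ)*θ) + cos (((k-1:ℤ):ℝ)*θ))/2 := by
        rw [cos_mul_cos]
        rw [show (θ + (k:ℝ)*θ) = ((k+1:ℤ):ℝ)*θ by push_cast; ring,
          show (θ - (k:ℝ)*θ) = -(((k-1:ℤ):ℝ)*θ) by push_cast; ring, Real.cos_neg]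
      rw [pow_succ]
      rw [mul_assoc, h1]; ring
    rw [integral_congr (fun θ _ => hcong θ)]
    have i1 : IntervalIntegrable (fun θ => (cos θ)^l * cos (((k+1:ℤ):ℝ) * θ)) MeasureTheory.volume 0 π :=
      ((by fun_prop : Continuous fun θ : ℝ => (cos θ)^l * cos (((k+1:ℤ):ℝ)*θ)).intervalIntegrable _ _)
    have i2 : IntervalIntegrable (fun θ => (cos θ)^l * cos (((k-1:ℤ):ℝ) * θ)) MeasureTheory.volume 0 π :=
      ((by fun_prop : Continuous fun θ : ℝ => (cos θ)^l * cos (((k-1:ℤ):ℝ)*θ)).intervalIntegrable _ _)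
    rw [show (fun θ => ((cos θ)^l * cos (((k+1:ℤ):ℝ) * θ) + (cos θ)^l * cos (((k-1:ℤ):ℝ) * θ))/2)
      = fun θ => ((cos θ)^l * cos (((k+1:ℤ):ℝ) * θ) + (cos θ)^l * cos (((k-1:ℤ):ℝ) * θ)) * (1/2) by
        funext θ; ring]
    rw [integral_mul_const, integral_add i1 i2, ih (k+1) (by omega), ih (k-1) (by omega)]
    ring

lemma integral_poly_mul_cos (p : Polynomial ℝ) (k : ℤ) (hk : (p.natDegree : ℤ) < k) :
    ∫ θ in (0:ℝ)..π, p.eval (cos θ) * cos ((k:ℝ) * θ) = 0 := by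
  have hcong : ∀ θ : ℝ, p.eval (cos θ) * cos ((k:ℝ)*θ)
      = ∑ i ∈ Finset.range (p.natDegree + 1), p.coeff i * ((cos θ)^i * cos ((k:ℝ)*θ)) := by
    intro θ
    rw [Polynomial.eval_eq_sum_range, Finset.sum_mul]
    congr 1; funext i; ring
  rw [integral_congr (fun θ _ => hcong θ), integral_finset_sum]
  · apply Finset.sum_eq_zero
    intro i hi
    rw [integral_const_mul, integral_cospow_mul_cos i k
      (by simp only [Finset.mem_range] at hi; omega), mul_zero]
  · intro i _
    exact ((by fun_prop : Continuous fun θ : ℝ =>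
      p.coeff i * ((cos θ)^i * cos ((k:ℝ)*θ))).intervalIntegrable _ _)

lemma hasDerivAt_sin_div (c : ℝ) (hc : c ≠ 0) (θ : ℝ) :
    HasDerivAt (fun x => sin (c*x)/c) (cos (c*θ)) θ := by
  have h1 : HasDerivAt (fun x : ℝ => c*x) c θ := by
    simpa using (hasDerivAt_id θ).const_mul c
  simpa [mul_comm, mul_div_assoc, mul_div_cancel_left₀ _ hc] using (h1.sin).div_const c

lemma integral_cos_mul_cos2k (k : ℤ) (hk : 1 ≤ k) (x y : ℝ) :
    ∫ θ in x..y, cos θ * cos (2*(k:ℝ) * θ) =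
      (sin (((2*k+1:ℤ):ℝ)*y)/((2*k+1:ℤ):ℝ) + sin (((2*k-1:ℤ):ℝ)*y)/((2*k-1:ℤ):ℝ))/2
      - (sin (((2*k+1:ℤ):ℝ)*x)/((2*k+1:ℤ):ℝ) + sin (((2*k-1:ℤ):ℝ)*x)/((2*k-1:ℤ):ℝ))/2 := by
  set a : ℝ := ((2*k+1:ℤ):ℝ)
  set b : ℝ := ((2*k-1:ℤ):ℝ)
  have ha : a ≠ 0 := by simp only [a]; exact_mod_cast (by omega : (2*k+1:ℤ) ≠ 0)
  have hb : b ≠ 0 := by simp only [b]; exact_mod_cast (by omega : (2*k-1:ℤ) ≠ 0)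
  have hG : ∀ θ ∈ Set.uIcc x y, HasDerivAt (fun t => (sin (a*t)/a + sin (b*t)/b)/2)
      (cos θ * cos (2*(k:ℝ)*θ)) θ := by
    intro θ _
    have := ((hasDerivAt_sin_div a ha θ).add (hasDerivAt_sin_div b hb θ)).div_const 2
    have heq : (cos (a*θ) + cos (b*θ))/2 = cos θ * cos (2*(k:ℝ)*θ) := by
      rw [cos_mul_cos]
      rw [show θ + 2*(k:ℝ)*θ = a*θ by simp only [a]; push_cast; ring,
        show θ - 2*(k:ℝ)*θ = -(b*θ) by simp only [b]; push_cast; ring, Real.cos_neg]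
    rw [← heq]
    exact this
  rw [integral_eq_sub_of_hasDerivAt hG
    ((by fun_prop : Continuous fun θ : ℝ => cos θ * cos (2*(k:ℝ)*θ)).intervalIntegrable _ _)]

lemma integral_abs_cos_mul_cos (k : ℤ) (hk : 1 ≤ k) :
    ∫ θ in (0:ℝ)..π, |cos θ| * cos (2*(k:ℝ) * θ)
      = (-1:ℝ)^(k+1) * 2 / (4*(k:ℝ)^2 - 1) := by
  have hsplit : ∫ θ in (0:ℝ)..π, |cos θ| * cos (2*(k:ℝ) * θ)
      = (∫ θ in (0:ℝ)..(π/2), |cos θ| * cos (2*(k:ℝ) * θ))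
      + ∫ θ in (π/2)..π, |cos θ| * cos (2*(k:ℝ) * θ) := by
    rw [integral_add_adjacent_intervals] <;>
      exact ((by fun_prop : Continuous fun θ : ℝ => |cos θ| * cos (2*(k:ℝ)*θ)).intervalIntegrable _ _)
  have h1 : ∫ θ in (0:ℝ)..(π/2), |cos θ| * cos (2*(k:ℝ) * θ)
      = ∫ θ in (0:ℝ)..(π/2), cos θ * cos (2*(k:ℝ) * θ) := by
    apply integral_congr
    intro θ hθ
    rw [Set.uIcc_of_le (by positivity : (0:ℝ) ≤ π/2)] at hθ
    show |cos θ| * cos (2*(k:ℝ)*θ) = cos θ * cos (2*(k:ℝ)*θ)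
    rw [abs_of_nonneg (Real.cos_nonneg_of_mem_Icc ⟨by linarith [hθ.1, pi_pos], hθ.2⟩)]
  have h2 : ∫ θ in (π/2)..π, |cos θ| * cos (2*(k:ℝ) * θ)
      = ∫ θ in (π/2)..π, -(cos θ * cos (2*(k:ℝ) * θ)) := by
    apply integral_congr
    intro θ hθ
    rw [Set.uIcc_of_le (by linarith [pi_pos] : π/2 ≤ π)] at hθ
    show |cos θ| * cos (2*(k:ℝ)*θ) = -(cos θ * cos (2*(k:ℝ)*θ))
    rw [abs_of_nonpos (Real.cos_nonpos_of_pi_div_two_le_of_le hθ.1 (by linarith [hθ.2, pi_pos]))]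
    ring
  have e0 : ∀ c : ℤ, sin (((c:ℤ):ℝ) * 0) = 0 := by intro c; simp
  have epi : ∀ c : ℤ, sin (((c:ℤ):ℝ) * π) = 0 := by intro c; exact Real.sin_int_mul_pi c
  have ehalf1 : sin (((2*k+1:ℤ):ℝ) * (π/2)) = (-1:ℝ)^k := by
    rw [show ((2*k+1:ℤ):ℝ) * (π/2) = (k:ℝ)*π + π/2 by push_cast; ring,
      Real.sin_add_pi_div_two]
    simpa using Real.cos_int_mul_pi_sub 0 k
  have ehalf2 : sin (((2*k-1:ℤ):ℝ) * (π/2)) = -(-1:ℝ)^k := by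
    rw [show ((2*k-1:ℤ):ℝ) * (π/2) = (k:ℝ)*π - π/2 by push_cast; ring,
      Real.sin_int_mul_pi_sub]
    simp
  have hk1 : ((2*k+1:ℤ):ℝ) ≠ 0 := by exact_mod_cast (by omega : (2*k+1:ℤ) ≠ 0)
  have hk2 : ((2*k-1:ℤ):ℝ) ≠ 0 := by exact_mod_cast (by omega : (2*k-1:ℤ) ≠ 0)
  rw [hsplit, h1, h2, integral_neg, integral_cos_mul_cos2k k hk, integral_cos_mul_cos2k k hk,
    e0, e0, epi, epi, ehalf1, ehalf2]
  have hd : (4*(k:ℝ)^2 - 1) ≠ 0 := by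
    have : ((2*k+1)*(2*k-1) : ℤ) ≠ 0 := by
      have := (by omega : (2*k+1:ℤ) ≠ 0); have := (by omega : (2*k-1:ℤ) ≠ 0); positivity
    have : (((2*k+1)*(2*k-1) : ℤ):ℝ) ≠ 0 := by exact_mod_cast this
    push_cast at this
    intro h; apply this; nlinarith [h]
  have hcast1 : ((2*k+1:ℤ):ℝ) = 2*(k:ℝ)+1 := by push_cast; ring
  have hcast2 : ((2*k-1:ℤ):ℝ) = 2*(k:ℝ)-1 := by push_cast; ring
  rw [hcast1, hcast2, zpow_add₀ (by norm_num : (-1:ℝ) ≠ 0)]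
  have h21 : (2*(k:ℝ)+1) ≠ 0 := by rw [← hcast1]; exact hk1
  have h22 : (2*(k:ℝ)-1) ≠ 0 := by rw [← hcast2]; exact hk2
  rw [show (4*(k:ℝ)^2 - 1) = (2*(k:ℝ)+1)*(2*(k:ℝ)-1) by ring]
  field_simp
  ring

lemma F_expand (n : ℕ) (θ : ℝ) :
    (∑ l ∈ Finset.range (n+1), (-1:ℝ)^l * cos (2*l*θ))^2
      + (∑ l ∈ Finset.range (n+1), (-1:ℝ)^l * sin (2*l*θ))^2
    = ∑ l ∈ Finset.range (n+1), ∑ l' ∈ Finset.range (n+1),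
        (-1:ℝ)^(l+l') * cos ((((l:ℤ) - l':ℤ):ℝ)*(2*θ)) := by
  rw [sq, sq, Finset.sum_mul_sum, Finset.sum_mul_sum, ← Finset.sum_add_distrib]
  apply Finset.sum_congr rfl
  intro l _
  rw [← Finset.sum_add_distrib]
  apply Finset.sum_congr rfl
  intro l' _
  have : (2*(l:ℝ)*θ) - (2*(l':ℝ)*θ) = (((l:ℤ) - l':ℤ):ℝ)*(2*θ) := by push_cast; ring
  rw [← this, Real.cos_sub, pow_add]
  ring

lemma K_expand (n : ℕ) (θ : ℝ) :
    ((∑ l ∈ Finset.range (n+1), (-1:ℝ)^l * cos (2*l*θ))^2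
      + (∑ l ∈ Finset.range (n+1), (-1:ℝ)^l * sin (2*l*θ))^2) * cos (4*n*θ)
    = ∑ l ∈ Finset.range (n+1), ∑ l' ∈ Finset.range (n+1),
        (-1:ℝ)^(l+l') * ((cos (2*((2*(n:ℤ)+l-l':ℤ):ℝ)*θ) + cos (2*((2*(n:ℤ)+l'-l:ℤ):ℝ)*θ))/2) := by
  rw [F_expand, Finset.sum_mul]
  apply Finset.sum_congr rfl
  intro l _
  rw [Finset.sum_mul]
  apply Finset.sum_congr rfl
  intro l' _
  rw [mul_assoc]
  congr 1
  rw [cos_mul_cos,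
    show (((l:ℤ) - l':ℤ):ℝ)*(2*θ) + 4*(n:ℝ)*θ = 2*((2*(n:ℤ)+l-l':ℤ):ℝ)*θ by push_cast; ring,
    show (((l:ℤ) - l':ℤ):ℝ)*(2*θ) - 4*(n:ℝ)*θ = -(2*((2*(n:ℤ)+l'-l:ℤ):ℝ)*θ) by push_cast; ring,
    Real.cos_neg]

noncomputable def Kker (n : ℕ) (θ : ℝ) : ℝ :=
  ((∑ l ∈ Finset.range (n+1), (-1:ℝ)^l * cos (2*l*θ))^2
    + (∑ l ∈ Finset.range (n+1), (-1:ℝ)^l * sin (2*l*θ))^2) * cos (4*n*θ)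

@[fun_prop]
lemma Kker_cont (n : ℕ) : Continuous (Kker n) := by
  unfold Kker; fun_prop

lemma neg_one_zpow_odd (j : ℤ) (h : Odd j) : (-1:ℝ)^j = -1 := by
  obtain ⟨m, rfl⟩ := h
  rw [zpow_add₀ (by norm_num : (-1:ℝ) ≠ 0), zpow_mul]
  norm_num

lemma integral_double_sum (f : ℕ → ℕ → ℝ → ℝ) (s t : Finset ℕ)
    (h : ∀ i j, Continuous (f i j)) :
    ∫ θ in (0:ℝ)..π, ∑ i ∈ s, ∑ j ∈ t, f i j θ
      = ∑ i ∈ s, ∑ j ∈ t, ∫ θ in (0:ℝ)..π, f i j θ := by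
  rw [integral_finset_sum (f := fun i θ => ∑ j ∈ t, f i j θ)
    (fun i _ => ((continuous_finset_sum t fun j _ => h i j).intervalIntegrable _ _))]
  exact Finset.sum_congr rfl fun i hi =>
    integral_finset_sum (f := fun j θ => f i j θ) (fun j hj => (h i j).intervalIntegrable _ _)

set_option maxHeartbeats 1000000 in
lemma integral_mul_Kker (g : ℝ → ℝ) (hg : Continuous g) (n : ℕ) :
    ∫ θ in (0:ℝ)..π, g (cos θ) * Kker n θ
    = ∑ l ∈ Finset.range (n+1), ∑ l' ∈ Finset.range (n+1), ((-1:ℝ)^(l+l')/2) *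
        ((∫ θ in (0:ℝ)..π, g (cos θ) * cos (2*((2*(n:ℤ)+l-l':ℤ):ℝ)*θ))
         + (∫ θ in (0:ℝ)..π, g (cos θ) * cos (2*((2*(n:ℤ)+l'-l:ℤ):ℝ)*θ))) := by
  have hgc : ∀ (j : ℤ), Continuous (fun θ : ℝ => g (cos θ) * cos (2*(j:ℝ)*θ)) := by
    intro j
    exact (hg.comp Real.continuous_cos).mul (by fun_prop)
  have hi : ∀ (j : ℤ), IntervalIntegrable (fun θ : ℝ => g (cos θ) * cos (2*(j:ℝ)*θ))
      MeasureTheory.volume 0 π := fun j => (hgc j).intervalIntegrable _ _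
  have hcong : ∀ θ : ℝ, g (cos θ) * Kker n θ
      = ∑ l ∈ Finset.range (n+1), ∑ l' ∈ Finset.range (n+1),
          ((-1:ℝ)^(l+l')/2) * (g (cos θ) * cos (2*((2*(n:ℤ)+l-l':ℤ):ℝ)*θ)
            + g (cos θ) * cos (2*((2*(n:ℤ)+l'-l:ℤ):ℝ)*θ)) := by
    intro θ
    rw [Kker, K_expand, Finset.mul_sum]
    apply Finset.sum_congr rfl
    intro l _
    rw [Finset.mul_sum]
    apply Finset.sum_congr rfl
    intro l' _
    ring
  have hterm : ∀ (c : ℝ) (j j' : ℤ),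
      ∫ θ in (0:ℝ)..π, c * (g (cos θ) * cos (2*(j:ℝ)*θ) + g (cos θ) * cos (2*(j':ℝ)*θ))
      = c * ((∫ θ in (0:ℝ)..π, g (cos θ) * cos (2*(j:ℝ)*θ))
         + (∫ θ in (0:ℝ)..π, g (cos θ) * cos (2*(j':ℝ)*θ))) := by
    intro c j j'
    rw [integral_const_mul, integral_add (hi j) (hi j')]
  have step1 : ∫ θ in (0:ℝ)..π, g (cos θ) * Kker n θ
      = ∫ θ in (0:ℝ)..π, ∑ l ∈ Finset.range (n+1), ∑ l' ∈ Finset.range (n+1),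
          ((-1:ℝ)^(l+l')/2) * (g (cos θ) * cos (2*((2*(n:ℤ)+l-l':ℤ):ℝ)*θ)
            + g (cos θ) * cos (2*((2*(n:ℤ)+l'-l:ℤ):ℝ)*θ)) :=
    integral_congr fun θ _ => hcong θ
  have step2 : ∫ θ in (0:ℝ)..π, ∑ l ∈ Finset.range (n+1), ∑ l' ∈ Finset.range (n+1),
          ((-1:ℝ)^(l+l')/2) * (g (cos θ) * cos (2*((2*(n:ℤ)+l-l':ℤ):ℝ)*θ)
            + g (cos θ) * cos (2*((2*(n:ℤ)+l'-l:ℤ):ℝ)*θ))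
      = ∑ l ∈ Finset.range (n+1), ∑ l' ∈ Finset.range (n+1),
          ∫ θ in (0:ℝ)..π, ((-1:ℝ)^(l+l')/2) * (g (cos θ) * cos (2*((2*(n:ℤ)+l-l':ℤ):ℝ)*θ)
            + g (cos θ) * cos (2*((2*(n:ℤ)+l'-l:ℤ):ℝ)*θ)) :=
    integral_double_sum _ _ _ (fun l l' =>
      continuous_const.mul ((hgc _).add (hgc _)))
  rw [step1, step2]
  exact Finset.sum_congr rfl fun l _ => Finset.sum_congr rfl fun l' _ => hterm _ _ _

lemma integral_poly_mul_cos2 (p : Polynomial ℝ) (k : ℤ) (h : (p.natDegree:ℤ) < 2*k) :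
    ∫ θ in (0:ℝ)..π, p.eval (cos θ) * cos (2*(k:ℝ)*θ) = 0 := by
  have := integral_poly_mul_cos p (2*k) h
  push_cast at this
  exact this

lemma Kker_poly (n : ℕ) (hn : 1 ≤ n) (p : Polynomial ℝ) (hp : p.natDegree ≤ n) :
    ∫ θ in (0:ℝ)..π, p.eval (cos θ) * Kker n θ = 0 := by
  rw [integral_mul_Kker (fun x => p.eval x) (by fun_prop) n]
  apply Finset.sum_eq_zero
  intro l hl
  apply Finset.sum_eq_zero
  intro l' hl'
  simp only [Finset.mem_range] at hl hl'
  rw [integral_poly_mul_cos2 p _ (by omega), integral_poly_mul_cos2 p _ (by omega)]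
  ring

lemma Kker_abs (n : ℕ) (hn : 1 ≤ n) :
    ∫ θ in (0:ℝ)..π, |cos θ| * Kker n θ ≤ -(((n:ℝ)+1)^2 * (2/(36*(n:ℝ)^2))) := by
  rw [integral_mul_Kker (fun x => |x|) continuous_abs n]
  have key : ∀ l ∈ Finset.range (n+1), ∀ l' ∈ Finset.range (n+1),
      ((-1:ℝ)^(l+l')/2) *
        ((∫ θ in (0:ℝ)..π, |cos θ| * cos (2*((2*(n:ℤ)+l-l':ℤ):ℝ)*θ))
         + (∫ θ in (0:ℝ)..π, |cos θ| * cos (2*((2*(n:ℤ)+l'-l:ℤ):ℝ)*θ)))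
      ≤ -(2/(36*(n:ℝ)^2)) := by
    intro l hl l' hl'
    simp only [Finset.mem_range] at hl hl'
    set j₁ : ℤ := 2*(n:ℤ)+l-l' with hj₁
    set j₂ : ℤ := 2*(n:ℤ)+l'-l with hj₂
    have hj₁1 : 1 ≤ j₁ := by omega
    have hj₂1 : 1 ≤ j₂ := by omega
    rw [integral_abs_cos_mul_cos j₁ hj₁1, integral_abs_cos_mul_cos j₂ hj₂1]
    have hsign : ∀ j : ℤ, j + 1 + 2*(l':ℤ) = (l:ℤ)+l'+1 + 2*(n:ℤ) ∨
        j + 1 + 2*(l:ℤ) = (l:ℤ)+l'+1 + 2*(n:ℤ) → True := fun _ _ => trivial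
    have hs : ∀ (j : ℤ) (t : ℤ), j + 1 = ((l:ℤ)+l'+1) + 2*t →
        (-1:ℝ)^(j+1) = -(-1:ℝ)^(l+l') := by
      intro j t ht
      rw [ht, zpow_add₀ (by norm_num : (-1:ℝ) ≠ 0), zpow_mul]
      norm_num
      rw [show ((l:ℤ)+l'+1) = ((l+l'+1 : ℕ):ℤ) by push_cast; ring, zpow_natCast, pow_succ]
      ring
    have e1 : (-1:ℝ)^(j₁+1) = -(-1:ℝ)^(l+l') := hs j₁ ((n:ℤ)-l') (by omega)
    have e2 : (-1:ℝ)^(j₂+1) = -(-1:ℝ)^(l+l') := hs j₂ ((n:ℤ)-l) (by omega)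
    rw [e1, e2]
    have hssq : ((-1:ℝ)^(l+l'))^2 = 1 := by
      rw [← pow_mul, mul_comm, pow_mul]; norm_num
    have hb : ∀ j : ℤ, 1 ≤ j → j ≤ 3*(n:ℤ) → 2/(36*(n:ℝ)^2) ≤ 2/(4*(j:ℝ)^2-1) := by
      intro j h1 h3
      have hj1 : (1:ℝ) ≤ (j:ℝ) := by exact_mod_cast h1
      have hj3 : (j:ℝ) ≤ 3*(n:ℝ) := by exact_mod_cast h3
      have hpos : (0:ℝ) < 4*(j:ℝ)^2-1 := by nlinarith
      have hle : 4*(j:ℝ)^2-1 ≤ 36*(n:ℝ)^2 := by nlinarith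
      exact div_le_div_of_nonneg_left (by norm_num) hpos hle
    have b1 := hb j₁ hj₁1 (by omega)
    have b2 := hb j₂ hj₂1 (by omega)
    have expand : ((-1:ℝ)^(l+l')/2) * ((-(-1:ℝ)^(l+l')) * 2 / (4*(j₁:ℝ)^2 - 1)
        + (-(-1:ℝ)^(l+l')) * 2 / (4*(j₂:ℝ)^2 - 1))
        = -(2/(4*(j₁:ℝ)^2-1) + 2/(4*(j₂:ℝ)^2-1))/2 := by
      have hr : ∀ A B : ℝ, ((-1:ℝ)^(l+l')/2) * ((-(-1:ℝ)^(l+l')) * 2 / A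
          + (-(-1:ℝ)^(l+l')) * 2 / B)
          = (((-1:ℝ)^(l+l'))^2) * (-(2/A + 2/B)/2) := by
        intro A B; ring
      rw [hr, hssq]; ring
    rw [expand]
    linarith
  calc ∑ l ∈ Finset.range (n+1), ∑ l' ∈ Finset.range (n+1), _
      ≤ ∑ l ∈ Finset.range (n+1), ∑ l' ∈ Finset.range (n+1), -(2/(36*(n:ℝ)^2)) :=
        Finset.sum_le_sum (fun l hl => Finset.sum_le_sum (fun l' hl' => key l hl l' hl'))
    _ = -(((n:ℝ)+1)^2 * (2/(36*(n:ℝ)^2))) := by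
        simp [Finset.sum_const, Finset.card_range]
        ring

lemma integral_cos_two (j : ℤ) (hj : j ≠ 0) :
    ∫ θ in (0:ℝ)..π, cos ((j:ℝ)*(2*θ)) = 0 := by
  rw [show (fun θ:ℝ => cos ((j:ℝ)*(2*θ))) = (fun θ:ℝ => cos (((2*j:ℤ):ℝ)*θ)) from
    funext fun θ => by push_cast; ring_nf]
  exact integral_cos_kx (2*j) (by omega)

lemma Kker_L1 (n : ℕ) :
    ∫ θ in (0:ℝ)..π, |Kker n θ| ≤ ((n:ℝ)+1)*π := by
  have hF : Continuous (fun θ : ℝ =>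
      (∑ l ∈ Finset.range (n+1), (-1:ℝ)^l * cos (2*l*θ))^2
        + (∑ l ∈ Finset.range (n+1), (-1:ℝ)^l * sin (2*l*θ))^2) := by fun_prop
  have hmono : ∫ θ in (0:ℝ)..π, |Kker n θ| ≤ ∫ θ in (0:ℝ)..π,
      ((∑ l ∈ Finset.range (n+1), (-1:ℝ)^l * cos (2*l*θ))^2
        + (∑ l ∈ Finset.range (n+1), (-1:ℝ)^l * sin (2*l*θ))^2) := by
    apply integral_mono_on pi_pos.le
      (((Kker_cont n).abs).intervalIntegrable _ _) (hF.intervalIntegrable _ _)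
    intro θ _
    rw [Kker, abs_mul]
    have h1 : |(∑ l ∈ Finset.range (n+1), (-1:ℝ)^l * cos (2*l*θ))^2
        + (∑ l ∈ Finset.range (n+1), (-1:ℝ)^l * sin (2*l*θ))^2|
        = (∑ l ∈ Finset.range (n+1), (-1:ℝ)^l * cos (2*l*θ))^2
        + (∑ l ∈ Finset.range (n+1), (-1:ℝ)^l * sin (2*l*θ))^2 :=
      abs_of_nonneg (by positivity)
    rw [h1]
    have h2 : |cos (4*(n:ℝ)*θ)| ≤ 1 := Real.abs_cos_le_one _
    nlinarith [sq_nonneg (∑ l ∈ Finset.range (n+1), (-1:ℝ)^l * cos (2*l*θ)),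
      sq_nonneg (∑ l ∈ Finset.range (n+1), (-1:ℝ)^l * sin (2*l*θ)), abs_nonneg (cos (4*(n:ℝ)*θ))]
  have hFval : ∫ θ in (0:ℝ)..π,
      ((∑ l ∈ Finset.range (n+1), (-1:ℝ)^l * cos (2*l*θ))^2
        + (∑ l ∈ Finset.range (n+1), (-1:ℝ)^l * sin (2*l*θ))^2) = ((n:ℝ)+1)*π := by
    have step1 : ∫ θ in (0:ℝ)..π,
        ((∑ l ∈ Finset.range (n+1), (-1:ℝ)^l * cos (2*l*θ))^2
          + (∑ l ∈ Finset.range (n+1), (-1:ℝ)^l * sin (2*l*θ))^2)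
        = ∫ θ in (0:ℝ)..π, ∑ l ∈ Finset.range (n+1), ∑ l' ∈ Finset.range (n+1),
            (-1:ℝ)^(l+l') * cos ((((l:ℤ) - l':ℤ):ℝ)*(2*θ)) :=
      integral_congr fun θ _ => F_expand n θ
    rw [step1, integral_double_sum _ _ _ (fun l l' => by fun_prop)]
    have hin : ∀ l ∈ Finset.range (n+1),
        ∑ l' ∈ Finset.range (n+1), (∫ θ in (0:ℝ)..π,
          (-1:ℝ)^(l+l') * cos ((((l:ℤ) - l':ℤ):ℝ)*(2*θ))) = π := by
      intro l hl
      rw [Finset.sum_eq_single l]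
      · rw [integral_const_mul]
        simp only [sub_self, Int.cast_zero, zero_mul, Real.cos_zero]
        norm_num [← two_mul l, pow_mul, integral_const, smul_eq_mul]
      · intro l' _ hne
        rw [integral_const_mul, integral_cos_two ((l:ℤ) - l') (by
          intro h; apply hne; omega), mul_zero]
      · intro h; exact absurd hl h
    rw [Finset.sum_congr rfl hin, Finset.sum_const, Finset.card_range, nsmul_eq_mul]
    push_cast; ring
  linarith

/-- **Bernstein's lower bound.** There is a constant `c > 0` such that for every
positive integer `n` and every real polynomial `p` of degree at most `n`, the
supremum over `[-1,1]` of `| |x| - p(x) |` is at least `c / n`: polynomial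
approximations to `|x|` on `[-1,1]` converge at best at the rate `O(n⁻¹)`. -/
theorem polynomial_approximation_of_abs_lower_bound :
    ∃ c : ℝ, 0 < c ∧
      ∀ n : ℕ, 0 < n → ∀ p : Polynomial ℝ, p.natDegree ≤ n →
        c / n ≤ sSup ((fun x : ℝ => |(|x| - p.eval x)|) '' Set.Icc (-1 : ℝ) 1) := by
  refine ⟨1/57, by norm_num, ?_⟩
  intro n hn p hp
  set g : ℝ → ℝ := fun x => |(|x| - p.eval x)| with hg
  set S := sSup (g '' Set.Icc (-1:ℝ) 1) with hSdef
  have hgc : Continuous g := (continuous_abs.sub p.continuous).abs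
  have hbdd : BddAbove (g '' Set.Icc (-1:ℝ) 1) :=
    (isCompact_Icc.image_of_continuousOn hgc.continuousOn).bddAbove
  have hub : ∀ x ∈ Set.Icc (-1:ℝ) 1, g x ≤ S := fun x hx => le_csSup hbdd ⟨x, hx, rfl⟩
  have hS0 : 0 ≤ S := le_trans (abs_nonneg _) (hub 0 (by norm_num))
  have i1 : IntervalIntegrable (fun θ : ℝ => |cos θ| * Kker n θ) MeasureTheory.volume 0 π :=
    (Real.continuous_cos.abs.mul (Kker_cont n)).intervalIntegrable _ _
  have i2 : IntervalIntegrable (fun θ : ℝ => p.eval (cos θ) * Kker n θ) MeasureTheory.volume 0 π :=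
    ((p.continuous.comp Real.continuous_cos).mul (Kker_cont n)).intervalIntegrable _ _
  have hI : ∫ θ in (0:ℝ)..π, (|cos θ| - p.eval (cos θ)) * Kker n θ
      = (∫ θ in (0:ℝ)..π, |cos θ| * Kker n θ)
        - ∫ θ in (0:ℝ)..π, p.eval (cos θ) * Kker n θ := by
    rw [← integral_sub i1 i2]
    exact integral_congr fun θ _ => by ring
  have hIa : ∫ θ in (0:ℝ)..π, (|cos θ| - p.eval (cos θ)) * Kker n θ
      ≤ -(((n:ℝ)+1)^2 * (2/(36*(n:ℝ)^2))) := by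
    rw [hI, Kker_poly n hn p hp, sub_zero]
    exact Kker_abs n hn
  have hIb : |∫ θ in (0:ℝ)..π, (|cos θ| - p.eval (cos θ)) * Kker n θ|
      ≤ S * (((n:ℝ)+1)*π) := by
    have h1 := abs_integral_le_integral_abs (μ := MeasureTheory.volume)
      (f := fun θ : ℝ => (|cos θ| - p.eval (cos θ)) * Kker n θ) pi_pos.le
    have h2 : ∫ θ in (0:ℝ)..π, |(|cos θ| - p.eval (cos θ)) * Kker n θ|
        ≤ ∫ θ in (0:ℝ)..π, S * |Kker n θ| := by
      apply integral_mono_on pi_pos.le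
        ((by fun_prop : Continuous fun θ : ℝ =>
            |(|cos θ| - p.eval (cos θ)) * Kker n θ|).intervalIntegrable _ _)
        ((by fun_prop : Continuous fun θ : ℝ => S * |Kker n θ|).intervalIntegrable _ _)
      intro θ _
      rw [abs_mul]
      apply mul_le_mul_of_nonneg_right _ (abs_nonneg _)
      exact hub (cos θ) ⟨Real.neg_one_le_cos θ, Real.cos_le_one θ⟩
    have h3 : ∫ θ in (0:ℝ)..π, S * |Kker n θ| = S * ∫ θ in (0:ℝ)..π, |Kker n θ| :=
      integral_const_mul _ _
    have h4 : S * ∫ θ in (0:ℝ)..π, |Kker n θ| ≤ S * (((n:ℝ)+1)*π) :=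
      mul_le_mul_of_nonneg_left (Kker_L1 n) hS0
    linarith
  set N : ℝ := (n:ℝ) with hN
  have hN1 : (1:ℝ) ≤ N := by rw [hN]; exact_mod_cast hn
  have hN0 : (0:ℝ) < N := by linarith
  have key : ((N+1)^2 * (2/(36*N^2))) ≤ S * ((N+1)*π) := by
    have h5 := neg_le_abs (∫ θ in (0:ℝ)..π, (|cos θ| - p.eval (cos θ)) * Kker n θ)
    linarith [hIa, hIb]
  have hπlt : π ≤ 3.15 := by linarith [Real.pi_lt_d2]
  have ht : 0 ≤ S*(N^2*(N+1)) := mul_nonneg hS0 (by positivity)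
  have key2 : 2*(N+1)^2 ≤ 113.4 * (S*(N^2*(N+1))) := by
    have h36 : (0:ℝ) < 36*N^2 := by positivity
    have h6 := mul_le_mul_of_nonneg_right key h36.le
    have e : S * ((N+1)*π) * (36*N^2) = (36*π)*(S*(N^2*(N+1))) := by ring
    rw [e] at h6
    have h1 : (N+1)^2 * (2/(36*N^2)) * (36*N^2) = 2*(N+1)^2 := by field_simp
    rw [h1] at h6
    have h2 : (36*π)*(S*(N^2*(N+1))) ≤ 113.4*(S*(N^2*(N+1))) :=
      mul_le_mul_of_nonneg_right (by linarith) ht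
    linarith
  rw [div_le_iff₀ hN0]
  nlinarith [key2, hN1, hS0, mul_pos hN0 (by linarith : (0:ℝ) < N+1)]
end
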